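/- Let G be a finite p-group, F a field of characteristic p, and M a finite-dimensional F G-module. Set n = dim_F H^0(G, M) - dim_F Ĥ^0(G, M), where Ĥ^0(G,M) = M^G / N·M with N the norm element. Then M decomposes as M ≅ M₁ ⊕ (F G)^n where M₁ is an F G-module with no projective (equivalently, no free) direct summand. -/

import Mathlib

/-- The norm element `N = ∑_{g ∈ G} g` of the group algebra. -/
noncomputable def normElem (F : Type) (G : Type) [Field F] [Group G] [Fintype G] :
    MonoidAlgebra F G :=
  ∑ g : G, MonoidAlgebra.of F G g

/-- The fixed-point submodule `M^G = H⁰(G, M)`. -/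
def fixedSub (F : Type) (G : Type) [Field F] [Group G] (M : Type) [AddCommGroup M]
    [Module F M] [Module (MonoidAlgebra F G) M]
    [SMulCommClass (MonoidAlgebra F G) F M] : Submodule F M where
  carrier := {m | ∀ g : G, MonoidAlgebra.of F G g • m = m}
  add_mem' := by
    intro a b ha hb g
    rw [smul_add, ha g, hb g]
  zero_mem' := by
    intro g
    simp
  smul_mem' := by
    intro c m hm g
    rw [smul_comm, hm g]

/-- The action of the norm element as an `F`-linear map. -/
noncomputable def normMap (F : Type) (G : Type) [Field F] [Group G] [Fintype G]
    (M : Type) [AddCommGroup M] [Module F M] [Module (MonoidAlgebra F G) M]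
    [SMulCommClass (MonoidAlgebra F G) F M] : M →ₗ[F] M where
  toFun m := normElem F G • m
  map_add' := smul_add _
  map_smul' c m := smul_comm _ c m

/-- `M` has no nonzero projective (equivalently free) direct summand. -/
def NoFreeSummand (R M : Type) [Ring R] [AddCommGroup M] [Module R M] : Prop :=
  ¬ ∃ (A B : Submodule R M), IsCompl A B ∧ Nonempty (A ≃ₗ[R] R)

section Aux

variable (F : Type) (G : Type) [Field F] [Group G] [Fintype G]

theorem of_mul_normElem (g : G) :
    MonoidAlgebra.of F G g * normElem F G = normElem F G := by
  unfold normElem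
  rw [Finset.mul_sum]
  exact Fintype.sum_equiv (Equiv.mulLeft g) _ _ (fun h => by
    simp [← map_mul, Equiv.mulLeft])

theorem normElem_mul_of (g : G) :
    normElem F G * MonoidAlgebra.of F G g = normElem F G := by
  unfold normElem
  rw [Finset.sum_mul]
  exact Fintype.sum_equiv (Equiv.mulRight g) _ _ (fun h => by
    simp [← map_mul, Equiv.mulRight])

theorem smul_normElem (c : F) :
    c • normElem F G = ∑ g : G, MonoidAlgebra.single g c := by
  unfold normElem
  rw [Finset.smul_sum]
  exact Finset.sum_congr rfl (fun g _ => by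
    rw [MonoidAlgebra.of_apply, MonoidAlgebra.smul_single', mul_one])

theorem normElem_apply (g : G) : (normElem F G).coeff g = 1 := by
  classical
  unfold normElem
  rw [MonoidAlgebra.coeff_sum, Finsupp.finset_sum_apply]
  simp only [MonoidAlgebra.of_apply, MonoidAlgebra.coeff_single, Finsupp.single_apply]
  rw [Finset.sum_ite_eq' Finset.univ g (fun _ => (1 : F))]
  simp

theorem normElem_ne_zero : normElem F G ≠ 0 := by
  intro h
  have h1 := normElem_apply F G 1
  rw [h] at h1
  simp at h1

/-- A `G`-fixed element of the group algebra is a scalar multiple of the norm. -/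
theorem fixed_eq_smul_normElem (x : MonoidAlgebra F G)
    (hx : ∀ g : G, MonoidAlgebra.of F G g * x = x) :
    x = x.coeff 1 • normElem F G := by
  ext g
  rw [MonoidAlgebra.coeff_smul, Finsupp.smul_apply, normElem_apply, smul_eq_mul, mul_one]
  conv_lhs => rw [← hx g]
  rw [MonoidAlgebra.of_apply, MonoidAlgebra.coeff_single_mul_apply, inv_mul_cancel, one_mul]

/-- The norm times anything is a scalar multiple of the norm. -/
theorem exists_normElem_mul (x : MonoidAlgebra F G) :
    ∃ c : F, normElem F G * x = c • normElem F G := by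
  induction x using MonoidAlgebra.induction_on with
  | of g => exact ⟨1, by rw [normElem_mul_of, one_smul]⟩
  | add f g hf hg =>
    obtain ⟨c, hc⟩ := hf; obtain ⟨d, hd⟩ := hg
    exact ⟨c + d, by rw [mul_add, hc, hd, add_smul]⟩
  | smul r f hf =>
    obtain ⟨c, hc⟩ := hf
    exact ⟨r * c, by rw [mul_smul_comm, hc, smul_smul]⟩

end Aux

section Fixed

variable (F : Type) (G : Type) [Field F] [Group G] [Fintype G]

/-- A nonzero module over the group algebra of a finite `p`-group in characteristic `p`
has a nonzero `G`-fixed vector. -/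
theorem exists_fixed_vector (p : ℕ) [Fact p.Prime] [CharP F p] (hG : IsPGroup p G)
    (V : Type) [AddCommGroup V] [Module F V] [Module (MonoidAlgebra F G) V]
    [IsScalarTower F (MonoidAlgebra F G) V] [SMulCommClass (MonoidAlgebra F G) F V]
    (v₀ : V) (hv₀ : v₀ ≠ 0) :
    ∃ v : V, v ≠ 0 ∧ ∀ g : G, MonoidAlgebra.of F G g • v = v := by
  classical
  letI : Algebra (ZMod p) F := ZMod.algebra F p
  letI : Module (ZMod p) V := Module.compHom V (algebraMap (ZMod p) F)
  set W : Submodule (ZMod p) V :=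
    Submodule.span (ZMod p) (Set.range fun g : G => MonoidAlgebra.of F G g • v₀) with hW
  have hstab : ∀ (g : G), ∀ w ∈ W, MonoidAlgebra.of F G g • w ∈ W := by
    intro g w hw
    induction hw using Submodule.span_induction with
    | mem x hx =>
      obtain ⟨h, rfl⟩ := hx
      refine Submodule.subset_span ⟨g * h, ?_⟩
      show MonoidAlgebra.of F G (g * h) • v₀ = MonoidAlgebra.of F G g • (MonoidAlgebra.of F G h • v₀)
      rw [map_mul, mul_smul]
    | zero => rw [smul_zero]; exact W.zero_mem
    | add x y _ _ hx hy => rw [smul_add]; exact W.add_mem hx hy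
    | smul c x _ hx =>
      have hcx : MonoidAlgebra.of F G g • (c • x)
          = c • (MonoidAlgebra.of F G g • x) := by
        show MonoidAlgebra.of F G g • ((algebraMap (ZMod p) F c) • x)
            = (algebraMap (ZMod p) F c) • (MonoidAlgebra.of F G g • x)
        rw [smul_comm]
      rw [hcx]; exact W.smul_mem c hx
  haveI : FiniteDimensional (ZMod p) W :=
    FiniteDimensional.span_of_finite _ (Set.finite_range _)
  haveI : Finite W := Module.finite_of_finite (ZMod p)
  haveI : Fintype W := Fintype.ofFinite _
  have hv₀W : v₀ ∈ W := by
    refine Submodule.subset_span ⟨1, ?_⟩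
    show MonoidAlgebra.of F G 1 • v₀ = v₀
    rw [map_one, one_smul]
  haveI : Nontrivial W := ⟨⟨⟨v₀, hv₀W⟩, 0, fun h => hv₀ (congrArg Subtype.val h)⟩⟩
  letI : SMul G W := ⟨fun g w => ⟨MonoidAlgebra.of F G g • (w : V), hstab g _ w.2⟩⟩
  letI : MulAction G W :=
    { one_smul := fun w => Subtype.ext (by
        show MonoidAlgebra.of F G 1 • (w : V) = w
        rw [map_one, one_smul])
      mul_smul := fun g h w => Subtype.ext (by
        show MonoidAlgebra.of F G (g * h) • (w : V)
            = MonoidAlgebra.of F G g • (MonoidAlgebra.of F G h • (w : V))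
        rw [map_mul, mul_smul]) }
  have hcard : Fintype.card W = Fintype.card (ZMod p) ^ Module.finrank (ZMod p) W :=
    Module.card_eq_pow_finrank
  have hp : p ∣ Nat.card W := by
    rw [Nat.card_eq_fintype_card, hcard, ZMod.card]
    exact dvd_pow_self p Module.finrank_pos.ne'
  have hmod := hG.card_modEq_card_fixedPoints W
  have hdvd : p ∣ Nat.card (MulAction.fixedPoints G W) :=
    (Nat.modEq_zero_iff_dvd).mp (hmod.symm.trans ((Nat.modEq_zero_iff_dvd).mpr hp))
  have h0fix : (0 : W) ∈ MulAction.fixedPoints G W := by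
    intro g
    exact Subtype.ext (by show MonoidAlgebra.of F G g • (0 : V) = 0; rw [smul_zero])
  haveI : Fintype (MulAction.fixedPoints G W) := Fintype.ofFinite _
  have hpos : 0 < Nat.card (MulAction.fixedPoints G W) :=
    Nat.card_pos_iff.mpr ⟨⟨⟨0, h0fix⟩⟩, inferInstance⟩
  have h2 : 1 < Fintype.card (MulAction.fixedPoints G W) := by
    rw [← Nat.card_eq_fintype_card]
    have := Nat.le_of_dvd hpos hdvd
    have hp2 := (Fact.out : p.Prime).two_le
    omega
  obtain ⟨w, hw⟩ := Fintype.exists_ne_of_one_lt_card h2 ⟨0, h0fix⟩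
  refine ⟨((w : W) : V), ?_, ?_⟩
  · intro h
    exact hw (Subtype.ext (Subtype.ext h))
  · intro g
    have := w.2 g
    exact congrArg Subtype.val this

end Fixed

section Phi

variable (F : Type) (G : Type) [Field F] [Group G] [Fintype G]
variable (M : Type) [AddCommGroup M] [Module F M] [Module (MonoidAlgebra F G) M]
  [IsScalarTower F (MonoidAlgebra F G) M] [SMulCommClass (MonoidAlgebra F G) F M]

/-- The `F`-linear inclusion of an `F G`-submodule. -/
def inclF (q : Submodule (MonoidAlgebra F G) M) : ↥q →ₗ[F] M where
  toFun := Subtype.val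
  map_add' _ _ := rfl
  map_smul' _ _ := rfl

instance (q : Submodule (MonoidAlgebra F G) M) :
    SMulCommClass (MonoidAlgebra F G) F ↥q :=
  ⟨fun r c x => Subtype.ext (smul_comm r c (x : M))⟩

instance (q : Submodule (MonoidAlgebra F G) M) [FiniteDimensional F M] :
    FiniteDimensional F ↥q :=
  FiniteDimensional.of_injective (inclF F G M q) Subtype.val_injective

/-- The equivariant map `x ↦ ∑ g λ(g⁻¹x) g` associated to an `F`-functional `λ`. -/
noncomputable def phiMap (l : M →ₗ[F] F) : M →ₗ[MonoidAlgebra F G] MonoidAlgebra F G where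
  toFun x := ∑ g : G, MonoidAlgebra.single g (l (MonoidAlgebra.of F G g⁻¹ • x))
  map_add' x y := by
    rw [← Finset.sum_add_distrib]
    exact Finset.sum_congr rfl fun g _ => by rw [smul_add, map_add, MonoidAlgebra.single_add]
  map_smul' r x := by
    show (∑ g : G, MonoidAlgebra.single g (l (MonoidAlgebra.of F G g⁻¹ • r • x)))
      = r • ∑ g : G, MonoidAlgebra.single g (l (MonoidAlgebra.of F G g⁻¹ • x))
    induction r using MonoidAlgebra.induction_on with
    | of h =>
      rw [smul_eq_mul (α := MonoidAlgebra F G), Finset.mul_sum]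
      refine Fintype.sum_equiv (Equiv.mulLeft h⁻¹) _ _ (fun g => ?_)
      simp only [Equiv.coe_mulLeft]
      have e1 : h * (h⁻¹ * g) = g := by group
      have e2 : g⁻¹ * h = (h⁻¹ * g)⁻¹ := by group
      rw [← mul_smul, ← map_mul, e2,
        show (MonoidAlgebra.of F G) h = MonoidAlgebra.single h (1 : F) from rfl,
        MonoidAlgebra.single_mul_single, one_mul, e1]
    | add f g hf hg =>
      simp only [add_smul]
      rw [← hf, ← hg, ← Finset.sum_add_distrib]
      exact Finset.sum_congr rfl fun g' _ => by
        rw [smul_add, map_add, MonoidAlgebra.single_add]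
    | smul c f hf =>
      simp only [smul_assoc]
      rw [← hf, Finset.smul_sum]
      refine Finset.sum_congr rfl fun g _ => ?_
      rw [smul_comm (MonoidAlgebra.of F G g⁻¹) c, map_smul, smul_eq_mul,
        ← MonoidAlgebra.smul_single']

theorem phiMap_apply (l : M →ₗ[F] F) (x : M) :
    phiMap F G M l x = ∑ g : G, MonoidAlgebra.single g (l (MonoidAlgebra.of F G g⁻¹ • x)) :=
  rfl

end Phi

section Transfer

variable (F : Type) (G : Type) [Field F] [Group G] [Fintype G]

theorem noFreeSummand_of_equiv {R : Type} [Ring R] {M M' : Type} [AddCommGroup M]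
    [Module R M] [AddCommGroup M'] [Module R M'] (e : M ≃ₗ[R] M')
    (h : NoFreeSummand R M) : NoFreeSummand R M' := by
  rintro ⟨A, B, hAB, ⟨eA⟩⟩
  refine h ⟨A.map e.symm.toLinearMap, B.map e.symm.toLinearMap, ?_, ⟨?_⟩⟩
  · exact (Submodule.orderIsoMapComap e.symm).isCompl hAB
  · exact ((Submodule.equivMapOfInjective e.symm.toLinearMap e.symm.injective A).symm).trans eA

theorem noFreeSummand_of_normZero (M : Type) [AddCommGroup M] [Module F M]
    [Module (MonoidAlgebra F G) M] [IsScalarTower F (MonoidAlgebra F G) M]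
    [SMulCommClass (MonoidAlgebra F G) F M]
    (h : ∀ x : M, normElem F G • x = 0) : NoFreeSummand (MonoidAlgebra F G) M := by
  rintro ⟨A, B, hAB, ⟨e⟩⟩
  have h1 : normElem F G • e.symm 1 = e.symm (normElem F G • 1) :=
    (e.symm.map_smul _ _).symm
  have h2 : ((normElem F G • e.symm 1 : A) : M) = 0 := by
    rw [Submodule.coe_smul]
    exact h _
  have h3 : normElem F G • e.symm 1 = 0 := Subtype.ext h2
  rw [h1] at h3
  have h4 : (normElem F G • 1 : MonoidAlgebra F G) = 0 := by
    have := congrArg e h3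
    rwa [e.apply_symm_apply, map_zero] at this
  rw [smul_eq_mul, mul_one] at h4
  exact normElem_ne_zero F G h4

end Transfer

section Key

variable (F : Type) (G : Type) [Field F] [Group G] [Fintype G]

set_option synthInstance.maxHeartbeats 1000000 in
set_option maxHeartbeats 2000000 in
theorem key (p : ℕ) [Fact p.Prime] [CharP F p] (hG : IsPGroup p G) (k : ℕ) :
    ∀ (M : Type) [AddCommGroup M] [Module F M] [Module (MonoidAlgebra F G) M]
      [IsScalarTower F (MonoidAlgebra F G) M] [SMulCommClass (MonoidAlgebra F G) F M]
      [FiniteDimensional F M],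
      Module.finrank F (LinearMap.range (normMap F G M)) = k →
      ∃ (M₁ P : Submodule (MonoidAlgebra F G) M), IsCompl M₁ P ∧
        Nonempty (P ≃ₗ[MonoidAlgebra F G] (Fin k → MonoidAlgebra F G)) ∧
        NoFreeSummand (MonoidAlgebra F G) ↥M₁ := by
  haveI : FiniteDimensional F (MonoidAlgebra F G) :=
    Module.Finite.equiv ((Finsupp.linearEquivFunOnFinite F F G).symm.trans
      (MonoidAlgebra.coeffLinearEquiv F).symm)
  induction k with
  | zero =>
    intro M _ _ _ _ _ _ hk
    have hbot : LinearMap.range (normMap F G M) = ⊥ := Submodule.finrank_eq_zero.mp hk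
    have hz : ∀ x : M, normElem F G • x = 0 := by
      intro x
      have : normMap F G M x ∈ LinearMap.range (normMap F G M) := LinearMap.mem_range_self _ x
      rw [hbot, Submodule.mem_bot] at this
      exact this
    refine ⟨⊤, ⊥, isCompl_top_bot, ⟨?_⟩, ?_⟩
    · haveI : Subsingleton (Fin 0 → MonoidAlgebra F G) := inferInstance
      exact LinearEquiv.ofSubsingleton _ _
    · exact noFreeSummand_of_equiv (Submodule.topEquiv.symm)
        (noFreeSummand_of_normZero F G M hz)
  | succ k IH =>
    intro M _ _ _ _ _ _ hk
    -- find an element with nonzero norm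
    have hex : ∃ m : M, normElem F G • m ≠ 0 := by
      by_contra h
      push_neg at h
      have hzero : LinearMap.range (normMap F G M) = ⊥ := by
        rw [LinearMap.range_eq_bot]
        ext x
        exact h x
      rw [hzero, finrank_bot] at hk
      exact Nat.succ_ne_zero k hk.symm
    obtain ⟨m, hm⟩ := hex
    -- a functional not vanishing on N•m
    have hl : ∃ l : M →ₗ[F] F, l (normElem F G • m) ≠ 0 := by
      by_contra h
      push_neg at h
      exact hm ((Module.forall_dual_apply_eq_zero_iff F _).mp h)
    obtain ⟨l, hl⟩ := hl
    set φ := phiMap F G M l with hφ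
    set ι := LinearMap.toSpanSingleton (MonoidAlgebra F G) M m with hι
    set ψ : MonoidAlgebra F G →ₗ[MonoidAlgebra F G] MonoidAlgebra F G := φ.comp ι with hψ
    have hψN : ψ (normElem F G) = l (normElem F G • m) • normElem F G := by
      show φ (normElem F G • m) = _
      rw [phiMap_apply, smul_normElem]
      refine Finset.sum_congr rfl fun g _ => ?_
      congr 2
      rw [← mul_smul, of_mul_normElem]
    have hker : LinearMap.ker ψ = ⊥ := by
      by_contra h
      obtain ⟨v₀, hv₀mem, hv₀⟩ := (Submodule.ne_bot_iff _).mp h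
      obtain ⟨v, hvne, hvfix⟩ := exists_fixed_vector F G p hG ↥(LinearMap.ker ψ)
        ⟨v₀, hv₀mem⟩ (fun hc => hv₀ (congrArg Subtype.val hc))
      have hfix' : ∀ g : G, MonoidAlgebra.of F G g * (v : MonoidAlgebra F G) = v := by
        intro g
        have := congrArg Subtype.val (hvfix g)
        rwa [Submodule.coe_smul, smul_eq_mul] at this
      have heq : (v : MonoidAlgebra F G) = (v : MonoidAlgebra F G).coeff 1 • normElem F G :=
        fixed_eq_smul_normElem F G _ hfix'
      have hc : (v : MonoidAlgebra F G).coeff 1 ≠ 0 := by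
        intro h0
        exact hvne (Subtype.ext (by rw [heq, h0, zero_smul]; rfl))
      have hv0 : ψ (v : MonoidAlgebra F G) = 0 := v.2
      rw [heq, LinearMap.map_smul_of_tower, hψN, smul_smul] at hv0
      exact normElem_ne_zero F G (by
        have := (smul_eq_zero.mp hv0).resolve_left (mul_ne_zero hc hl)
        exact this)
    have hinj : Function.Injective ψ := LinearMap.ker_eq_bot.mp hker
    have hsurj : Function.Surjective ψ :=
      (LinearMap.injective_iff_surjective (f := ψ.restrictScalars F)).mp hinj
    let eψ : MonoidAlgebra F G ≃ₗ[MonoidAlgebra F G] MonoidAlgebra F G :=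
      LinearEquiv.ofBijective ψ ⟨hinj, hsurj⟩
    set π : M →ₗ[MonoidAlgebra F G] MonoidAlgebra F G :=
      eψ.symm.toLinearMap.comp φ with hπ
    have hπι : ∀ x : MonoidAlgebra F G, π (ι x) = x := by
      intro x
      show eψ.symm (φ (ι x)) = x
      have h1 : φ (ι x) = eψ x := rfl
      rw [h1, eψ.symm_apply_apply]
    have hιinj : Function.Injective ι := by
      intro a b hab
      have := congrArg π hab
      rwa [hπι, hπι] at this
    set P : Submodule (MonoidAlgebra F G) M := LinearMap.range ι with hP
    let eP : ↥P ≃ₗ[MonoidAlgebra F G] MonoidAlgebra F G :=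
      (LinearEquiv.ofInjective ι hιinj).symm
    let f : M →ₗ[MonoidAlgebra F G] ↥P :=
      (LinearEquiv.ofInjective ι hιinj).toLinearMap.comp π
    have hf : ∀ x : ↥P, f ↑x = x := by
      rintro ⟨-, y, rfl⟩
      show (LinearEquiv.ofInjective ι hιinj) (π (ι y)) = _
      rw [hπι]
      rfl
    have hcompl : IsCompl P (LinearMap.ker f) := LinearMap.isCompl_of_proj hf
    set M₁' : Submodule (MonoidAlgebra F G) M := LinearMap.ker f with hM₁'
    -- dimension bookkeeping
    set T₁ : Submodule F M :=
      Submodule.map (inclF F G M M₁') (LinearMap.range (normMap F G ↥M₁')) with hT₁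
    set S : Submodule F M := Submodule.span F {normElem F G • m} with hS
    have hmP : m ∈ P := ⟨1, by rw [hι]; simp [LinearMap.toSpanSingleton_apply]⟩
    have ha : LinearMap.range (normMap F G M) = T₁ ⊔ S := by
      apply le_antisymm
      · rintro x ⟨y, rfl⟩
        have hy : y ∈ M₁' ⊔ P := by
          rw [hcompl.symm.codisjoint.eq_top]; trivial
        obtain ⟨a, haM, b, hbP, rfl⟩ := Submodule.mem_sup.mp hy
        have h1 : normMap F G M (a + b) = normElem F G • a + normElem F G • b := by
          show normElem F G • (a + b) = _
          rw [smul_add]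
        rw [h1]
        refine Submodule.add_mem _ (Submodule.mem_sup_left ?_) (Submodule.mem_sup_right ?_)
        · exact ⟨normMap F G ↥M₁' ⟨a, haM⟩, LinearMap.mem_range_self _ _, rfl⟩
        · obtain ⟨x, rfl⟩ := hbP
          have h2 : normElem F G • (ι x) = (normElem F G * x) • m := by
            rw [hι, LinearMap.toSpanSingleton_apply, ← mul_smul]
          obtain ⟨c, hc⟩ := exists_normElem_mul F G x
          rw [h2, hc, smul_assoc]
          exact Submodule.smul_mem _ _ (Submodule.mem_span_singleton_self _)
      · refine sup_le ?_ ?_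
        · rintro x ⟨y, ⟨z, rfl⟩, rfl⟩
          exact ⟨(z : M), rfl⟩
        · rw [hS, Submodule.span_le, Set.singleton_subset_iff]
          exact ⟨m, rfl⟩
    have hb : T₁ ⊓ S = ⊥ := by
      rw [eq_bot_iff]
      rintro x ⟨hx1, hx2⟩
      obtain ⟨y, ⟨z, rfl⟩, rfl⟩ := hx1
      have hmem1 : (inclF F G M M₁') (normMap F G ↥M₁' z) ∈ M₁' := by
        show ((normMap F G ↥M₁' z : ↥M₁') : M) ∈ M₁'
        exact (normMap F G ↥M₁' z).2
      have hmem2 : (inclF F G M M₁') (normMap F G ↥M₁' z) ∈ P := by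
        obtain ⟨c, hc⟩ := Submodule.mem_span_singleton.mp hx2
        rw [← hc]
        exact Submodule.smul_of_tower_mem _ _ (Submodule.smul_mem _ _ hmP)
      have := hcompl.disjoint.symm.le_bot ⟨hmem1, hmem2⟩
      simpa using this
    have hfr : Module.finrank F T₁ = k := by
      have h1 := Submodule.finrank_sup_add_finrank_inf_eq T₁ S
      rw [hb, ← ha, finrank_bot, add_zero] at h1
      rw [finrank_span_singleton hm] at h1
      omega
    have hfr2 : Module.finrank F (LinearMap.range (normMap F G ↥M₁')) = k := by
      rw [← hfr]
      exact LinearEquiv.finrank_eq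
        (Submodule.equivMapOfInjective (inclF F G M M₁') Subtype.val_injective _)
    obtain ⟨A, B, hAB, ⟨eB⟩, hnofree⟩ := IH ↥M₁' hfr2
    -- assemble
    refine ⟨A.map M₁'.subtype, (B.map M₁'.subtype) ⊔ P, ?_, ⟨?_⟩, ?_⟩
    · constructor
      · rw [Submodule.disjoint_def]
        intro x hxA hxPf
        obtain ⟨yb, hyb, z, hz, rfl⟩ := Submodule.mem_sup.mp hxPf
        have hybM : yb ∈ M₁' := by
          obtain ⟨b, _, rfl⟩ := hyb
          exact b.2
        have hxM : yb + z ∈ M₁' := by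
          obtain ⟨a, -, ha⟩ := hxA
          rw [← ha]
          exact a.2
        have hzM : z ∈ M₁' := by
          have := M₁'.sub_mem hxM hybM
          simpa using this
        have hz0 : z = 0 := hcompl.disjoint.symm.le_bot ⟨hzM, hz⟩
        subst hz0
        rw [add_zero] at hxA ⊢
        obtain ⟨a, haA, hax⟩ := hxA
        obtain ⟨b, hbB, hbx⟩ := hyb
        have hab : a = b := Subtype.val_injective (hax.trans hbx.symm)
        subst hab
        have : a ∈ A ⊓ B := ⟨haA, hbB⟩
        rw [hAB.inf_eq_bot] at this
        rw [← hax, this]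
        rfl
      · rw [codisjoint_iff, ← sup_assoc, ← Submodule.map_sup, hAB.sup_eq_top,
          Submodule.map_subtype_top, sup_comm]
        exact hcompl.sup_eq_top
    · -- the iso P_final ≃ Fin (k+1) → R
      have hdisj : Disjoint (B.map M₁'.subtype) P := by
        refine Disjoint.mono_left ?_ hcompl.disjoint.symm
        rintro x ⟨b, _, rfl⟩
        exact b.2
      let cop : (↥(B.map M₁'.subtype) × ↥P) →ₗ[MonoidAlgebra F G] M :=
        (B.map M₁'.subtype).subtype.coprod P.subtype
      have hcopinj : Function.Injective cop := by
        rw [← LinearMap.ker_eq_bot, eq_bot_iff]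
        rintro ⟨a, b⟩ hab
        have h0 : (a : M) + (b : M) = 0 := hab
        have haP : (a : M) ∈ B.map M₁'.subtype := a.2
        have hbP : (a : M) ∈ P := by
          have : (a : M) = -(b : M) := eq_neg_of_add_eq_zero_left h0
          rw [this]
          exact P.neg_mem b.2
        have ha0 : (a : M) = 0 := hdisj.le_bot ⟨haP, hbP⟩
        have hb0 : (b : M) = 0 := by
          rw [ha0, zero_add] at h0
          exact h0
        refine Submodule.mem_bot _ |>.mpr ?_
        exact Prod.ext (Subtype.ext ha0) (Subtype.ext hb0)
      have hrange : LinearMap.range cop = (B.map M₁'.subtype) ⊔ P := by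
        rw [LinearMap.range_coprod, Submodule.range_subtype, Submodule.range_subtype]
      let e1 := LinearEquiv.ofInjective cop hcopinj
      let e2 := LinearEquiv.ofEq _ _ hrange
      let e3 : ↥((B.map M₁'.subtype) ⊔ P) ≃ₗ[MonoidAlgebra F G]
          (↥(B.map M₁'.subtype) × ↥P) := (e1.trans e2).symm
      let e4 : ↥(B.map M₁'.subtype) ≃ₗ[MonoidAlgebra F G] (Fin k → MonoidAlgebra F G) :=
        (Submodule.equivMapOfInjective M₁'.subtype Subtype.val_injective B).symm.trans eB
      let e5 : (↥(B.map M₁'.subtype) × ↥P) ≃ₗ[MonoidAlgebra F G]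
          ((Fin k → MonoidAlgebra F G) × (Fin 1 → MonoidAlgebra F G)) :=
        e4.prodCongr (eP.trans (LinearEquiv.funUnique (Fin 1) (MonoidAlgebra F G)
          (MonoidAlgebra F G)).symm)
      let e6 : ((Fin k → MonoidAlgebra F G) × (Fin 1 → MonoidAlgebra F G)) ≃ₗ[MonoidAlgebra F G]
          ((Fin k ⊕ Fin 1) → MonoidAlgebra F G) :=
        (LinearEquiv.sumArrowLequivProdArrow _ _ _ _).symm
      let e7 : ((Fin k ⊕ Fin 1) → MonoidAlgebra F G) ≃ₗ[MonoidAlgebra F G]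
          (Fin (k + 1) → MonoidAlgebra F G) :=
        (LinearEquiv.funCongrLeft (MonoidAlgebra F G) (MonoidAlgebra F G) finSumFinEquiv).symm
      exact e3.trans (e5.trans (e6.trans e7))
    · exact noFreeSummand_of_equiv
        (Submodule.equivMapOfInjective M₁'.subtype Subtype.val_injective A) hnofree

end Key

set_option maxHeartbeats 1000000 in
/-- Over a field of characteristic `p` and a finite `p`-group `G`, if
`n = dim H⁰(G,M) - dim Ĥ⁰(G,M)` (where `Ĥ⁰(G,M) = M^G/N·M`), then `M ≅ M₁ ⊕ (F G)ⁿ`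
with `M₁` having no projective (equivalently free) direct summand. -/
theorem stmt5 (p : ℕ) [Fact p.Prime] (F : Type) [Field F] [CharP F p]
    (G : Type) [Group G] [Fintype G] (hG : IsPGroup p G)
    (M : Type) [AddCommGroup M] [Module F M] [Module (MonoidAlgebra F G) M]
    [IsScalarTower F (MonoidAlgebra F G) M] [SMulCommClass (MonoidAlgebra F G) F M]
    [FiniteDimensional F M] (n : ℕ)
    (hn : n + Module.finrank F
        (↥(fixedSub F G M) ⧸
          Submodule.comap (fixedSub F G M).subtype (LinearMap.range (normMap F G M)))
      = Module.finrank F (fixedSub F G M)) :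
    ∃ (M₁ P : Submodule (MonoidAlgebra F G) M), IsCompl M₁ P ∧
      Nonempty (P ≃ₗ[MonoidAlgebra F G] (Fin n → MonoidAlgebra F G)) ∧
      NoFreeSummand (MonoidAlgebra F G) ↥M₁ := by
  set K := fixedSub F G M with hK
  set A := LinearMap.range (normMap F G M) with hA
  set C := Submodule.comap K.subtype A with hC
  have hAK : A ≤ K := by
    rintro x ⟨y, rfl⟩
    intro g
    show MonoidAlgebra.of F G g • (normElem F G • y) = normElem F G • y
    rw [← mul_smul, of_mul_normElem]
  have h1 : Module.finrank F (↥K ⧸ C) + Module.finrank F C = Module.finrank F K :=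
    Submodule.finrank_quotient_add_finrank C
  have h2 : n = Module.finrank F C := by omega
  have h3 : Submodule.map K.subtype C = A := by
    rw [hC, Submodule.map_comap_subtype, inf_eq_right.mpr hAK]
  have h4 : Module.finrank F A = n := by
    rw [← h3, Submodule.finrank_map_subtype_eq, h2]
  exact key F G p hG n M h4
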